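/- For the cone M = 𝒫(δ) = {A ∈ Sym²(ℝⁿ) : A + δ(tr A)·I ≥ 0} with δ > 0, the Riesz characteristic p_M = sup{p ∈ ℝ : I − p·P_e ∈ M for all unit vectors e} equals (δn + 1)/(δ + 1). -/

import Mathlib

open Pointwise

/-- The Riesz characteristic of a cone `M ⊂ Sym²(ℝⁿ)`:
`p_M = sup {p ∈ ℝ : I − p P_e ∈ M for all unit vectors e}`, where `P_e = e eᵗ` is the
orthogonal projection onto the line `ℝe`. -/
noncomputable def rieszChar {n : ℕ} (M : Set (Matrix (Fin n) (Fin n) ℝ)) : ℝ :=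
  sSup {p : ℝ | ∀ e : Fin n → ℝ, ∑ i, e i ^ 2 = 1 →
    (1 : Matrix (Fin n) (Fin n) ℝ) - p • Matrix.vecMulVec e e ∈ M}

/-- The cone `𝒫(δ) = {A : A + δ (tr A) I ≥ 0}`. -/
def deltaCone (n : ℕ) (δ : ℝ) : Set (Matrix (Fin n) (Fin n) ℝ) :=
  {A | (A + δ • A.trace • (1 : Matrix (Fin n) (Fin n) ℝ)).PosSemidef}

open Matrix

lemma quad_aux (n : ℕ) (e x : Fin n → ℝ) (a p : ℝ) :
    x ⬝ᵥ ((a • (1:Matrix (Fin n) (Fin n) ℝ) - p • Matrix.vecMulVec e e) *ᵥ x)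
      = a * (∑ i, x i ^ 2) - p * (∑ i, e i * x i) ^ 2 := by
  rw [Matrix.sub_mulVec, Matrix.smul_mulVec, Matrix.smul_mulVec,
    Matrix.one_mulVec, dotProduct_sub, dotProduct_smul, dotProduct_smul]
  have h1 : x ⬝ᵥ x = ∑ i, x i ^ 2 := by simp [dotProduct, sq]
  have h2 : x ⬝ᵥ (Matrix.vecMulVec e e *ᵥ x) = (∑ i, e i * x i) ^ 2 := by
    simp only [dotProduct, Matrix.mulVec, Matrix.vecMulVec_apply, sq, Finset.sum_mul]
    congr 1; ext i
    simp only [dotProduct, Finset.mul_sum]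
    congr 1; ext j; ring
  rw [h1, h2]; simp

lemma key_aux (n : ℕ) (δ : ℝ) (e : Fin n → ℝ) (he : ∑ i, e i ^ 2 = 1) (p : ℝ) :
    ((1 : Matrix (Fin n) (Fin n) ℝ) - p • Matrix.vecMulVec e e)
      + δ • ((1 : Matrix (Fin n) (Fin n) ℝ) - p • Matrix.vecMulVec e e).trace
          • (1 : Matrix (Fin n) (Fin n) ℝ)
    = (1 + δ * (n - p)) • (1 : Matrix (Fin n) (Fin n) ℝ) - p • Matrix.vecMulVec e e := by
  have htrV : (Matrix.vecMulVec e e).trace = 1 := by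
    simp only [Matrix.trace, Matrix.diag, Matrix.vecMulVec_apply, ← sq]
    exact he
  have htr : ((1 : Matrix (Fin n) (Fin n) ℝ) - p • Matrix.vecMulVec e e).trace = n - p := by
    rw [Matrix.trace_sub, Matrix.trace_smul, htrV, Matrix.trace_one]
    simp
  rw [htr]
  ext i j
  simp only [Matrix.add_apply, Matrix.sub_apply, Matrix.smul_apply, Matrix.one_apply,
    smul_eq_mul]
  by_cases h : i = j <;> simp [h] <;> ring

theorem rieszChar_deltaCone (n : ℕ) (hn : 0 < n) (δ : ℝ) (hδ : 0 < δ) :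
    rieszChar (deltaCone n δ) = (δ * n + 1) / (δ + 1) := by
  have hδ1 : (0:ℝ) < δ + 1 := by linarith
  set c : ℝ := (δ * n + 1) / (δ + 1) with hc
  have hset : {p : ℝ | ∀ e : Fin n → ℝ, ∑ i, e i ^ 2 = 1 →
      (1 : Matrix (Fin n) (Fin n) ℝ) - p • Matrix.vecMulVec e e ∈ deltaCone n δ}
      = Set.Iic c := by
    ext p
    simp only [Set.mem_setOf_eq, Set.mem_Iic]
    constructor
    · intro hp
      set e0 : Fin n → ℝ := fun i => if i = ⟨0, hn⟩ then 1 else 0 with he0def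
      have he0 : ∑ i, e0 i ^ 2 = 1 := by
        have : ∀ i, e0 i ^ 2 = if i = ⟨0, hn⟩ then 1 else 0 := by
          intro i; by_cases h : i = ⟨0, hn⟩ <;> simp [he0def, h]
        rw [Finset.sum_congr rfl fun i _ => this i]
        simp
      have he0' : ∑ i, e0 i * e0 i = 1 := by
        have : ∀ i, e0 i * e0 i = e0 i ^ 2 := fun i => (sq (e0 i)).symm
        rw [Finset.sum_congr rfl fun i _ => this i, he0]
      have h := hp e0 he0
      rw [deltaCone, Set.mem_setOf_eq, posSemidef_iff_dotProduct_mulVec] at h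
      have h2 := h.2 e0
      rw [key_aux n δ e0 he0 p] at h2
      have hstar : star e0 = e0 := star_trivial e0
      rw [hstar, quad_aux n e0 e0 (1 + δ * (n - p)) p, he0, he0'] at h2
      rw [hc, le_div_iff₀ hδ1]
      nlinarith [h2]
    · intro hp e he
      have hp' : p * (δ + 1) ≤ δ * n + 1 := by
        rw [hc, le_div_iff₀ hδ1] at hp; linarith
      set a : ℝ := 1 + δ * (n - p) with hadef
      have hap : 0 ≤ a - p := by
        have : a - p = 1 + δ * n - (δ + 1) * p := by rw [hadef]; ring
        rw [this]; nlinarith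
      have ha : 0 ≤ a := by
        rcases le_or_gt 0 p with h0 | h0
        · linarith
        · have : δ * p < 0 := mul_neg_of_pos_of_neg hδ h0
          have hdn : 0 ≤ δ * n := mul_nonneg hδ.le (Nat.cast_nonneg n)
          rw [hadef]; nlinarith
      show ((1 : Matrix (Fin n) (Fin n) ℝ) - p • Matrix.vecMulVec e e
          + δ • ((1 : Matrix (Fin n) (Fin n) ℝ) - p • Matrix.vecMulVec e e).trace
            • (1 : Matrix (Fin n) (Fin n) ℝ)).PosSemidef
      rw [key_aux n δ e he p]
      have hV : (Matrix.vecMulVec e e)ᵀ = Matrix.vecMulVec e e := by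
        ext i j
        simp [Matrix.transpose_apply, Matrix.vecMulVec_apply, mul_comm]
      rw [posSemidef_iff_dotProduct_mulVec]
      constructor
      · show _ᴴ = _
        simp [Matrix.conjTranspose_sub, Matrix.conjTranspose_smul, hV]
      · intro x
        rw [star_trivial, quad_aux n e x a p]
        set X : ℝ := ∑ i, x i ^ 2 with hX
        set S : ℝ := (∑ i, e i * x i) ^ 2 with hS
        have hXnn : 0 ≤ X := Finset.sum_nonneg fun i _ => sq_nonneg _
        have hSnn : 0 ≤ S := sq_nonneg _
        have hSX : S ≤ X := by
          have := Finset.sum_mul_sq_le_sq_mul_sq Finset.univ e x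
          rw [he, one_mul] at this
          exact this
        nlinarith [mul_nonneg ha (sub_nonneg.2 hSX), mul_nonneg hap hSnn]
  unfold rieszChar
  rw [hset, csSup_Iic]
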